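/- Let λ, λ' ∈ ℤ[i] be coprime primary primes (λ ≡ λ' ≡ 1 mod 2+2i) with p = N(λ) and q = N(λ') distinct rational primes congruent to 1 mod 4. Then the product of rational quartic residue symbols (p/q)₄ (q/p)₄ equals the quadratic residue symbol (λ'/λ)₂ over ℤ[i]. -/

import Mathlib

open GaussianInt Zsqrtd Finset

namespace Stmt18

def gi : GaussianInt := ⟨0, 1⟩

def S : Finset GaussianInt := {0, 1, -1, gi, -gi}

lemma norm_eq_one_of_pow4 {u : GaussianInt} (hu : u ^ 4 = 1) : u.norm = 1 := by
  have h4 : u.norm ^ 4 = 1 := by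
    have := congrArg Zsqrtd.norm hu
    simpa [pow_succ, Zsqrtd.norm_mul, Zsqrtd.norm_one] using this
  have hnn : 0 ≤ u.norm := GaussianInt.norm_nonneg u
  have e1 : (u.norm - 1) * ((u.norm + 1) * (u.norm ^ 2 + 1)) = 0 := by nlinarith [h4]
  rcases mul_eq_zero.mp e1 with h | h
  · linarith
  · nlinarith [sq_nonneg u.norm]

lemma unit_mem_S {u : GaussianInt} (hu : u ^ 4 = 1) : u ∈ S := by
  have hn : u.norm = 1 := norm_eq_one_of_pow4 hu
  obtain ⟨a, b⟩ := u
  have h : a * a + b * b = 1 := by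
    have := hn
    simp only [Zsqrtd.norm_def] at this
    linarith
  have ha1 : -1 ≤ a := by nlinarith
  have ha2 : a ≤ 1 := by nlinarith
  have hb1 : -1 ≤ b := by nlinarith
  have hb2 : b ≤ 1 := by nlinarith
  simp only [S, gi, Finset.mem_insert, Finset.mem_singleton]
  interval_cases a <;> interval_cases b <;>
    first | (exfalso; revert h; decide) | decide

lemma S_mul_S {u v : GaussianInt} (hu : u ∈ S) (hv : v ∈ S) : u * v ∈ S := by
  fin_cases hu <;> fin_cases hv <;> decide

lemma S_norm_sub_lt {u v : GaussianInt} (hu : u ∈ S) (hv : v ∈ S) : (u - v).norm < 5 := by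
  fin_cases hu <;> fin_cases hv <;> decide

lemma S_pow4 {u : GaussianInt} (hu : u ∈ S) : u ^ 4 ∈ S := by fin_cases hu <;> decide

lemma S_sq {u : GaussianInt} (hu : u ∈ S) : u ^ 2 ∈ S := by fin_cases hu <;> decide

lemma exists_resHom (l : GaussianInt) (p : ℕ) (hp : p.Prime) (hl : Prime l)
    (hN : l.norm = (p : ℤ)) :
    ∃ φ : GaussianInt →+* ZMod p, ∀ z, φ z = 0 ↔ l ∣ z := by
  haveI : Fact p.Prime := ⟨hp⟩
  have hxy : l.re * l.re + l.im * l.im = (p : ℤ) := by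
    have := hN
    simp only [Zsqrtd.norm_def] at this
    linarith
  have hpInt : Prime (p : ℤ) := Nat.prime_iff_prime_int.mp hp
  have hpy : ¬ ((p : ℤ) ∣ l.im) := by
    intro h
    have hx2 : (p : ℤ) ∣ l.re * l.re := by
      have e : l.re * l.re = (p : ℤ) - l.im * l.im := by linarith
      rw [e]
      exact dvd_sub dvd_rfl (h.mul_left l.im)
    have hx : (p : ℤ) ∣ l.re := (hpInt.dvd_mul.mp hx2).elim id id
    have hpp : (p : ℤ) * (p : ℤ) ∣ (p : ℤ) := by
      have h2 : (p : ℤ) * (p : ℤ) ∣ l.re * l.re + l.im * l.im :=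
        dvd_add (mul_dvd_mul hx hx) (mul_dvd_mul h h)
      rwa [hxy] at h2
    have hple : (p : ℤ) * (p : ℤ) ≤ (p : ℤ) :=
      Int.le_of_dvd (by exact_mod_cast hp.pos) hpp
    have : (2 : ℤ) ≤ (p : ℤ) := by exact_mod_cast hp.two_le
    nlinarith
  have hy0 : ((l.im : ℤ) : ZMod p) ≠ 0 := by
    rwa [Ne, ZMod.intCast_zmod_eq_zero_iff_dvd]
  set y : ZMod p := ((l.im : ℤ) : ZMod p) with hy
  set x : ZMod p := ((l.re : ℤ) : ZMod p) with hx
  set t : ZMod p := -x * y⁻¹ with htdef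
  have hyt : y * t = -x := by
    rw [htdef]; field_simp
  have hsq : x * x + y * y = 0 := by
    have h := congrArg (fun n : ℤ => (n : ZMod p)) hxy
    push_cast at h
    rw [← hx, ← hy] at h
    rw [h]
    exact ZMod.natCast_self p
  have ht : t * t = ((-1 : ℤ) : ZMod p) := by
    have h1 : y * y * (t * t + 1) = 0 := by
      have e : y * y * (t * t + 1) = (y * t) * (y * t) + y * y := by ring
      rw [e, hyt]
      calc -x * -x + y * y = x * x + y * y := by ring
      _ = 0 := hsq
    have h2 : t * t + 1 = 0 := by
      rcases mul_eq_zero.mp h1 with h | h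
      · exact absurd h (mul_ne_zero hy0 hy0)
      · exact h
    push_cast
    linear_combination h2
  refine ⟨Zsqrtd.lift ⟨t, ht⟩, ?_⟩
  have happ : ∀ z : GaussianInt, Zsqrtd.lift ⟨t, ht⟩ z = (z.re : ZMod p) + (z.im : ZMod p) * t :=
    fun z => Zsqrtd.lift_apply_apply _ z
  have hφl : Zsqrtd.lift ⟨t, ht⟩ l = 0 := by
    rw [happ, ← hx, ← hy]
    linear_combination hyt
  obtain ⟨T, hT⟩ : ∃ T : ℤ, ((T : ℤ) : ZMod p) = t :=
    ⟨(t.val : ℤ), by simp [ZMod.intCast_cast, ZMod.natCast_val]⟩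
  have hpdvd : l ∣ ((p : ℤ) : GaussianInt) := ⟨star l, by rw [← hN, Zsqrtd.norm_eq_mul_conj]⟩
  have hIntDvd : ∀ n : ℤ, (p : ℤ) ∣ n → l ∣ (n : GaussianInt) := by
    intro n hn
    obtain ⟨k, hk⟩ := hn
    refine dvd_trans hpdvd ⟨(k : GaussianInt), ?_⟩
    rw [hk]; push_cast; ring
  have hkey : l ∣ (gi - (T : GaussianInt)) := by
    have hyT : (p : ℤ) ∣ (l.re + l.im * T) := by
      rw [← ZMod.intCast_zmod_eq_zero_iff_dvd]
      push_cast
      rw [hT, ← hx, ← hy]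
      linear_combination hyt
    have hfac : ((l.im : ℤ) : GaussianInt) * (gi - (T : GaussianInt)) =
        l - (((l.re + l.im * T : ℤ)) : GaussianInt) := by
      refine Zsqrtd.ext ?_ ?_ <;> simp [gi, Zsqrtd.re_mul, Zsqrtd.im_mul, Zsqrtd.re_sub,
        Zsqrtd.im_sub, Zsqrtd.re_intCast, Zsqrtd.im_intCast] <;> ring
    have hdvd1 : l ∣ ((l.im : ℤ) : GaussianInt) * (gi - (T : GaussianInt)) := by
      rw [hfac]
      exact dvd_sub dvd_rfl (hIntDvd _ hyT)
    rcases hl.2.2 _ _ hdvd1 with h | h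
    · exfalso
      obtain ⟨w, hw⟩ := h
      have hnorm : l.im * l.im = (p : ℤ) * w.norm := by
        have := congrArg Zsqrtd.norm hw
        rwa [Zsqrtd.norm_mul, Zsqrtd.norm_intCast, hN] at this
      exact hpy ((hpInt.dvd_mul.mp ⟨w.norm, hnorm⟩).elim id id)
    · exact h
  intro z
  constructor
  · intro hz
    rw [happ] at hz
    have hzT : (p : ℤ) ∣ (z.re + z.im * T) := by
      rw [← ZMod.intCast_zmod_eq_zero_iff_dvd]
      push_cast
      rw [hT]
      exact hz
    have hzdec : z = (((z.re + z.im * T : ℤ)) : GaussianInt) +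
        (z.im : GaussianInt) * (gi - (T : GaussianInt)) := by
      refine Zsqrtd.ext ?_ ?_ <;> simp [gi, Zsqrtd.re_mul, Zsqrtd.im_mul, Zsqrtd.re_add,
        Zsqrtd.im_add, Zsqrtd.re_sub, Zsqrtd.im_sub, Zsqrtd.re_intCast, Zsqrtd.im_intCast] <;> ring
    rw [hzdec]
    exact dvd_add (hIntDvd _ hzT) (Dvd.dvd.mul_left hkey _)
  · rintro ⟨w, rfl⟩
    rw [map_mul, hφl, zero_mul]

lemma resHom_small {l : GaussianInt} {p : ℕ} {φ : GaussianInt →+* ZMod p}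
    (hker : ∀ z, φ z = 0 ↔ l ∣ z) (hN : l.norm = (p : ℤ))
    {z : GaussianInt} (hz : φ z = 0) (hlt : z.norm < (p : ℤ)) : z = 0 := by
  by_contra h0
  obtain ⟨w, hw⟩ := (hker z).mp hz
  have hnz : z.norm = (p : ℤ) * w.norm := by
    have := congrArg Zsqrtd.norm hw
    rwa [Zsqrtd.norm_mul, hN] at this
  have hw0 : w ≠ 0 := by rintro rfl; rw [mul_zero] at hw; exact h0 hw
  have h1 : 1 ≤ w.norm := GaussianInt.norm_pos.mpr hw0
  have h2 : 0 < (p : ℤ) := by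
    have : 0 ≤ z.norm := GaussianInt.norm_nonneg z
    nlinarith [GaussianInt.norm_pos.mpr h0]
  nlinarith

lemma phi_injOn_S {q : ℕ} {l' : GaussianInt} {φ : GaussianInt →+* ZMod q}
    (hq5 : 5 ≤ q) (hker : ∀ z, φ z = 0 ↔ l' ∣ z) (hN : l'.norm = (q : ℤ))
    {u v : GaussianInt} (hu : u ∈ S) (hv : v ∈ S) (h : φ u = φ v) : u = v := by
  have h0 : φ (u - v) = 0 := by rw [map_sub, h, sub_self]
  have := resHom_small hker hN h0
    (lt_of_lt_of_le (S_norm_sub_lt hu hv) (by exact_mod_cast hq5))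
  exact sub_eq_zero.mp this

noncomputable section

/-- The quartic residue character associated to a residue hom `φ : ℤ[i] → ZMod q`. -/
def quarCharFun (q : ℕ) (φ : GaussianInt →+* ZMod q) : ZMod q → GaussianInt := fun a =>
  if a ^ ((q - 1) / 4) = 1 then 1
  else if a ^ ((q - 1) / 4) = -1 then -1
  else if a ^ ((q - 1) / 4) = φ gi then gi
  else if a ^ ((q - 1) / 4) = -φ gi then -gi
  else 0

lemma exists_quarChar (q : ℕ) (hq : q.Prime) (hq4 : q % 4 = 1) (l' : GaussianInt)
    (φ : GaussianInt →+* ZMod q) (hker : ∀ z, φ z = 0 ↔ l' ∣ z) (hN : l'.norm = (q : ℤ)) :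
    ∃ χ₀ : MulChar (ZMod q) GaussianInt,
      (∀ a, χ₀ a ∈ S) ∧ (∀ a, φ (χ₀ a) = a ^ ((q - 1) / 4)) ∧
      (∀ a : (ZMod q)ˣ, (χ₀ (a : ZMod q)) ^ 4 = 1) ∧
      (∃ a : (ZMod q)ˣ, (χ₀ (a : ZMod q)) ^ 2 = -1) ∧
      ((χ₀ (-1)) ^ 2 = 1) := by
  haveI : Fact q.Prime := ⟨hq⟩
  have hq5 : 5 ≤ q := by have h2 := hq.two_le; omega
  set e : ℕ := (q - 1) / 4 with he
  have h4e : 4 * e = q - 1 := by omega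
  have hepos : 0 < e := by omega
  have inj := fun {u v : GaussianInt} (hu : u ∈ S) (hv : v ∈ S) (h : φ u = φ v) =>
    phi_injOn_S hq5 hker hN hu hv h
  set c : ZMod q → GaussianInt := quarCharFun q φ with hc
  have hgiS : gi ∈ S := by decide
  have hgi'S : -gi ∈ S := by decide
  have h1S : (1 : GaussianInt) ∈ S := by decide
  have hm1S : (-1 : GaussianInt) ∈ S := by decide
  have h0S : (0 : GaussianInt) ∈ S := by decide
  have hcS : ∀ a, c a ∈ S := by
    intro a
    rw [hc]
    unfold quarCharFun
    split_ifs <;> assumption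
  have htau : φ gi * φ gi = -1 := by
    rw [← map_mul]
    have hgg : gi * gi = -1 := by decide
    rw [hgg, map_neg, map_one]
  have hcphi : ∀ a, φ (c a) = a ^ e := by
    intro a
    by_cases h0 : a = 0
    · have hz : a ^ e = 0 := by rw [h0]; exact zero_pow hepos.ne'
      have htau0 : φ gi ≠ 0 := by
        intro h
        rw [h] at htau
        exact one_ne_zero (by linear_combination htau : (1 : ZMod q) = 0)
      rw [hc]; unfold quarCharFun
      rw [← he, hz]
      have hn1 : (0 : ZMod q) ≠ 1 := zero_ne_one
      have hn2 : (0 : ZMod q) ≠ -1 := by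
        intro h; exact one_ne_zero (neg_eq_zero.mp h.symm)
      have hn3 : (0 : ZMod q) ≠ φ gi := fun h => htau0 h.symm
      have hn4 : (0 : ZMod q) ≠ -φ gi := by
        intro h; exact htau0 (neg_eq_zero.mp h.symm)
      rw [if_neg hn1, if_neg hn2, if_neg hn3, if_neg hn4]
      rw [map_zero]
    · have hv4 : (a ^ e) ^ 4 = 1 := by
        rw [← pow_mul, mul_comm e 4, h4e]
        exact ZMod.pow_card_sub_one_eq_one h0
      set v : ZMod q := a ^ e with hvdef
      have hcases : v = 1 ∨ v = -1 ∨ v = φ gi ∨ v = -φ gi := by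
        have h2 : (v ^ 2 - 1) * (v ^ 2 + 1) = 0 := by ring_nf; linear_combination hv4
        rcases mul_eq_zero.mp h2 with h | h
        · rcases mul_self_eq_one_iff.mp (by linear_combination h : v * v = 1) with h' | h'
          · exact Or.inl h'
          · exact Or.inr (Or.inl h')
        · have h3 : (v - φ gi) * (v + φ gi) = 0 := by linear_combination h - htau
          rcases mul_eq_zero.mp h3 with h' | h'
          · exact Or.inr (Or.inr (Or.inl (by linear_combination h')))
          · exact Or.inr (Or.inr (Or.inr (by linear_combination h')))
      rw [hc]; unfold quarCharFun
      rw [← he, ← hvdef]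
      split_ifs with hv1 hv2 hv3 hv4'
      · rw [map_one, hv1]
      · rw [map_neg, map_one, hv2]
      · rw [hv3]
      · rw [map_neg, hv4']
      · exact absurd hcases (by tauto)
  have hmul : ∀ a b, c (a * b) = c a * c b := by
    intro a b
    refine inj (hcS _) (S_mul_S (hcS a) (hcS b)) ?_
    rw [map_mul, hcphi, hcphi, hcphi, mul_pow]
  have hone : c 1 = 1 := by
    refine inj (hcS 1) h1S ?_
    rw [hcphi, one_pow, map_one]
  have hzero : c 0 = 0 := by
    refine inj (hcS 0) h0S ?_
    rw [hcphi, map_zero, zero_pow hepos.ne']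
  have hnonunit : ∀ a : ZMod q, ¬ IsUnit a → c a = 0 := by
    intro a ha
    have h0 : a = 0 := by
      by_contra h
      exact ha (isUnit_iff_ne_zero.mpr h)
    rw [h0, hzero]
  set χ₀ : MulChar (ZMod q) GaussianInt :=
    { toFun := c
      map_one' := hone
      map_mul' := hmul
      map_nonunit' := hnonunit } with hχ₀
  have happ : ∀ a, χ₀ a = c a := fun _ => rfl
  have hpow4 : ∀ a : (ZMod q)ˣ, (χ₀ (a : ZMod q)) ^ 4 = 1 := by
    intro a
    rw [happ]
    refine inj (S_pow4 (hcS _)) h1S ?_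
    rw [map_pow, hcphi, map_one, ← pow_mul, mul_comm e 4, h4e]
    exact ZMod.pow_card_sub_one_eq_one a.ne_zero
  have hex : ∃ a : (ZMod q)ˣ, (χ₀ (a : ZMod q)) ^ 2 = -1 := by
    obtain ⟨g, hg⟩ := IsCyclic.exists_generator (α := (ZMod q)ˣ)
    have hord : orderOf g = q - 1 := by
      rw [orderOf_eq_card_of_forall_mem_zpowers hg, Nat.card_eq_fintype_card, ZMod.card_units]
    refine ⟨g, ?_⟩
    have hv4 : (((g : ZMod q)) ^ e) ^ 4 = 1 := by
      rw [← pow_mul, mul_comm e 4, h4e]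
      exact ZMod.pow_card_sub_one_eq_one g.ne_zero
    have hv2 : ((g : ZMod q) ^ e) ^ 2 ≠ 1 := by
      intro hcon
      have hu : g ^ (e * 2) = 1 := by
        apply Units.ext
        push_cast
        rw [pow_mul]
        exact hcon
      have hdvd := orderOf_dvd_of_pow_eq_one hu
      rw [hord] at hdvd
      have := Nat.le_of_dvd (by omega) hdvd
      omega
    have hv2' : ((g : ZMod q) ^ e) ^ 2 = -1 := by
      have h2 : ((((g : ZMod q)) ^ e) ^ 2 - 1) * ((((g : ZMod q)) ^ e) ^ 2 + 1) = 0 := by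
        ring_nf; linear_combination hv4
      rcases mul_eq_zero.mp h2 with h | h
      · exact absurd (by linear_combination h) hv2
      · linear_combination h
    rw [happ]
    refine inj (S_sq (hcS _)) hm1S ?_
    rw [map_pow, hcphi, map_neg, map_one]
    exact hv2'
  have hneg1 : (χ₀ (-1)) ^ 2 = 1 := by
    rw [happ]
    refine inj (S_sq (hcS _)) h1S ?_
    rw [map_pow, hcphi, map_one, ← pow_mul]
    have : (-1 : ZMod q) ^ (e * 2) = ((-1 : ZMod q) ^ 2) ^ e := by
      rw [← pow_mul, mul_comm]
    rw [this, neg_one_sq, one_pow]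
  exact ⟨χ₀, fun a => happ a ▸ hcS a, fun a => happ a ▸ hcphi a, hpow4, hex, hneg1⟩


lemma mem_S_of_norm_one {u : GaussianInt} (hn : u.norm = 1) : u ∈ S := by
  obtain ⟨a, b⟩ := u
  have h : a * a + b * b = 1 := by
    have := hn
    simp only [Zsqrtd.norm_def] at this
    linarith
  have ha1 : -1 ≤ a := by nlinarith
  have ha2 : a ≤ 1 := by nlinarith
  have hb1 : -1 ≤ b := by nlinarith
  have hb2 : b ≤ 1 := by nlinarith
  simp only [S, gi, Finset.mem_insert, Finset.mem_singleton]
  interval_cases a <;> interval_cases b <;>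
    first | (exfalso; revert h; decide) | decide

/-- the additive group hom taking real parts -/
def reHom : GaussianInt →+ ℤ where
  toFun := Zsqrtd.re
  map_zero' := rfl
  map_add' := fun _ _ => rfl

lemma sum_pow_eval (q : ℕ) [hqF : Fact q.Prime] (hq4 : q % 4 = 1) :
    ∑ x : ZMod q, x ^ ((q - 1) / 4) * (1 - x) ^ ((q - 1) / 4) = 0 := by
  have hq := hqF.out
  have hq5 : 5 ≤ q := by have := hq.two_le; omega
  set e := (q - 1) / 4 with he
  have h4e : 4 * e = q - 1 := by omega
  have expand : ∀ x : ZMod q, x ^ e * (1 - x) ^ e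
      = ∑ k ∈ Finset.range (e + 1),
          (-1 : ZMod q) ^ (e - k) * (e.choose k : ZMod q) * x ^ (e + (e - k)) := by
    intro x
    rw [sub_eq_add_neg, add_pow, Finset.mul_sum]
    refine Finset.sum_congr rfl fun k hk => ?_
    rw [one_pow, one_mul, neg_pow, pow_add]
    ring
  calc ∑ x : ZMod q, x ^ e * (1 - x) ^ e
      = ∑ x : ZMod q, ∑ k ∈ Finset.range (e + 1),
          (-1 : ZMod q) ^ (e - k) * (e.choose k : ZMod q) * x ^ (e + (e - k)) :=
        Finset.sum_congr rfl fun x _ => expand x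
    _ = ∑ k ∈ Finset.range (e + 1),
          ∑ x : ZMod q, (-1 : ZMod q) ^ (e - k) * (e.choose k : ZMod q) * x ^ (e + (e - k)) :=
        Finset.sum_comm
    _ = 0 := by
        refine Finset.sum_eq_zero fun k hk => ?_
        rw [← Finset.mul_sum]
        have hlt : e + (e - k) < Fintype.card (ZMod q) - 1 := by rw [ZMod.card]; omega
        rw [FiniteField.sum_pow_lt_card_sub_one _ _ hlt, mul_zero]

lemma star_mul_self_of_pow4 {u : GaussianInt} (h : u ^ 4 = 1) : star u * u = 1 := by
  have hu := unit_mem_S h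
  fin_cases hu <;> first | (exact absurd h (by decide)) | decide

lemma ne_zero_of_pow4 {u : GaussianInt} (h : u ^ 4 = 1) : u ≠ 0 := by
  rintro rfl
  exact absurd h (by decide)

lemma jacobi_structure (q : ℕ) [hqF : Fact q.Prime] (hq4 : q % 4 = 1) (l' : GaussianInt)
    (hl' : Prime l') (hprimary : ((⟨2, 2⟩ : GaussianInt)) ∣ (l' - 1))
    (φ : GaussianInt →+* ZMod q) (hker : ∀ z, φ z = 0 ↔ l' ∣ z) (hN : l'.norm = (q : ℤ))
    (χ₀ : MulChar (ZMod q) GaussianInt)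
    (hphi : ∀ a, φ (χ₀ a) = a ^ ((q - 1) / 4))
    (hpow4 : ∀ a : (ZMod q)ˣ, (χ₀ (a : ZMod q)) ^ 4 = 1)
    (hex : ∃ a : (ZMod q)ˣ, (χ₀ (a : ZMod q)) ^ 2 = -1)
    (hneg1 : (χ₀ (-1)) ^ 2 = 1) :
    ∃ m : GaussianInt, jacobiSum χ₀ χ₀ = l' * m ∧ (m = 1 ∨ m = -1) := by
  classical
  have hq := hqF.out
  have hq5 : 5 ≤ q := by have := hq.two_le; omega
  set J₀ := jacobiSum χ₀ χ₀ with hJ₀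
  have hφJ : φ J₀ = 0 := by
    rw [hJ₀, ← jacobiSum_ringHomComp]
    unfold jacobiSum
    rw [← sum_pow_eval q hq4]
    refine Finset.sum_congr rfl fun x _ => ?_
    rw [MulChar.ringHomComp_apply, MulChar.ringHomComp_apply, hphi, hphi]
  obtain ⟨m, hm⟩ := (hker J₀).mp hφJ
  have hne1 : χ₀ ≠ 1 := by
    obtain ⟨a, ha⟩ := hex
    intro h
    rw [h, MulChar.one_apply_coe] at ha
    exact absurd ha (by decide)
  have hne2 : χ₀ * χ₀ ≠ 1 := by
    obtain ⟨a, ha⟩ := hex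
    intro h
    have h2 := congrArg (fun ψ : MulChar (ZMod q) GaussianInt => ψ (a : ZMod q)) h
    simp only [MulChar.mul_apply, MulChar.one_apply_coe] at h2
    rw [← pow_two, ha] at h2
    exact absurd h2 (by decide)
  have hnorm : J₀ * star J₀ = ((q : ℕ) : GaussianInt) := by
    have hC : ringChar ℂ ≠ ringChar (ZMod q) := by
      rw [ringChar.eq_zero, ZMod.ringChar_zmod_n]
      omega
    set χc : MulChar (ZMod q) ℂ := χ₀.ringHomComp GaussianInt.toComplex with hχc
    have hχcne : χc ≠ 1 :=
      (MulChar.ringHomComp_ne_one_iff GaussianInt.toComplex_injective).mpr hne1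
    have hχcne2 : χc * χc ≠ 1 := by
      rw [hχc, ← MulChar.ringHomComp_mul]
      exact (MulChar.ringHomComp_ne_one_iff GaussianInt.toComplex_injective).mpr hne2
    have hmain := jacobiSum_mul_jacobiSum_inv hC hχcne hχcne hχcne2
    have hinveq : χc⁻¹ = (χ₀.ringHomComp (starRingEnd GaussianInt)).ringHomComp
        GaussianInt.toComplex := by
      refine MulChar.ext fun a => ?_
      have h4 : (χ₀ (a : ZMod q)) ^ 4 = 1 := hpow4 a
      have hstar : χ₀ ((a : ZMod q)⁻¹) = star (χ₀ (a : ZMod q)) := by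
        have h1 : χ₀ ((a : ZMod q)⁻¹) * χ₀ (a : ZMod q) = 1 := by
          rw [← map_mul, inv_mul_cancel₀ a.ne_zero, MulChar.map_one]
        have h2 : star (χ₀ (a : ZMod q)) * χ₀ (a : ZMod q) = 1 := star_mul_self_of_pow4 h4
        exact mul_right_cancel₀ (ne_zero_of_pow4 h4) (h1.trans h2.symm)
      calc χc⁻¹ (a : ZMod q) = χc ((a : ZMod q)⁻¹) := MulChar.inv_apply' χc _
        _ = GaussianInt.toComplex (χ₀ ((a : ZMod q)⁻¹)) := rfl
        _ = GaussianInt.toComplex (star (χ₀ (a : ZMod q))) := by rw [hstar]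
        _ = ((χ₀.ringHomComp (starRingEnd GaussianInt)).ringHomComp
              GaussianInt.toComplex) (a : ZMod q) := rfl
    rw [hinveq, hχc, jacobiSum_ringHomComp, jacobiSum_ringHomComp, jacobiSum_ringHomComp] at hmain
    rw [← map_mul, ZMod.card] at hmain
    apply GaussianInt.toComplex_injective
    rw [map_natCast]
    exact hmain
  have hq0 : ((q : ℕ) : GaussianInt) ≠ 0 := by
    intro h
    have h2 : ((q : ℕ) : GaussianInt).re = 0 := by rw [h]; rfl
    rw [Zsqrtd.re_natCast] at h2
    have h3 : q = 0 := by exact_mod_cast h2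
    omega
  have hl'star : l' * star l' = ((q : ℕ) : GaussianInt) := by
    have h1 : (((q : ℤ)) : GaussianInt) = l' * star l' := by
      rw [← hN]; exact Zsqrtd.norm_eq_mul_conj l'
    have h2 : ((q : ℕ) : GaussianInt) = (((q : ℤ)) : GaussianInt) := by push_cast; ring
    rw [h2, h1]
  have hmm : m * star m = 1 := by
    have h1 : l' * star l' * (m * star m) = l' * star l' := by
      calc l' * star l' * (m * star m) = (l' * m) * star (l' * m) := by rw [star_mul]; ring
        _ = J₀ * star J₀ := by rw [← hm]
        _ = ((q : ℕ) : GaussianInt) := hnorm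
        _ = l' * star l' := hl'star.symm
    have hA : l' * star l' ≠ 0 := by rw [hl'star]; exact hq0
    refine mul_left_cancel₀ hA ?_
    rw [mul_one]
    exact h1
  have hmnorm : m.norm = 1 := by
    have h0 := Zsqrtd.norm_eq_mul_conj m
    rw [hmm] at h0
    have h1 : ((m.norm : ℤ) : GaussianInt).re = (1 : GaussianInt).re := by rw [h0]
    rw [Zsqrtd.re_intCast] at h1
    exact h1
  have hmS : m ∈ S := mem_S_of_norm_one hmnorm
  refine ⟨m, hm, ?_⟩
  have hpow4' : ∀ a : ZMod q, a ≠ 0 → (χ₀ a) ^ 4 = 1 := fun a ha => hpow4 (Units.mk0 a ha)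
  set ρ : MulChar (ZMod q) GaussianInt := χ₀ * χ₀ with hρ
  have hρρ : ρ * ρ = 1 := by
    refine MulChar.ext fun a => ?_
    rw [MulChar.one_apply_coe, hρ]
    simp only [MulChar.mul_apply]
    have h4 := hpow4 a
    rw [show (4 : ℕ) = 2 * 2 from rfl, pow_mul, pow_two, pow_two] at h4
    linear_combination h4
  have hρinv : ρ⁻¹ = ρ := inv_eq_of_mul_eq_one_right hρρ
  have hρneg1 : ρ (-1) = 1 := by
    rw [hρ, MulChar.mul_apply, ← pow_two]
    exact hneg1
  have hJρ : jacobiSum ρ ρ = -1 := by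
    have h := jacobiSum_nontrivial_inv (show ρ ≠ 1 from hρ ▸ hne2)
    rw [hρinv] at h
    rw [h, hρneg1]
  have him : ∃ t : ℤ, l'.im = 2 * t := by
    obtain ⟨w, hw⟩ := hprimary
    refine ⟨w.im + w.re, ?_⟩
    have h1 := congrArg Zsqrtd.im hw
    simp only [Zsqrtd.im_sub, Zsqrtd.im_one, Zsqrtd.im_mul] at h1
    rw [sub_zero] at h1
    rw [h1]
    ring
  -- the mod-4 congruence for the real part of J₀
  have hre : ((2 * J₀.re : ℤ) : ZMod 4) = 2 := by
    have hJsd : J₀ = ∑ x ∈ univ \ ({0, 1} : Finset (ZMod q)), χ₀ x * χ₀ (1 - x) := by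
      rw [hJ₀]; exact jacobiSum_eq_sum_sdiff χ₀ χ₀
    have hJρsd : jacobiSum ρ ρ = ∑ x ∈ univ \ ({0, 1} : Finset (ZMod q)), ρ x * ρ (1 - x) :=
      jacobiSum_eq_sum_sdiff ρ ρ
    have hcard : (univ \ ({0, 1} : Finset (ZMod q))).card = q - 2 := by
      rw [Finset.card_sdiff_of_subset (Finset.subset_univ _), Finset.card_univ, ZMod.card,
        Finset.card_pair (zero_ne_one)]
    have hterm : ∀ x ∈ (univ \ ({0, 1} : Finset (ZMod q))),
        ((2 * (χ₀ x * χ₀ (1 - x)).re : ℤ) : ZMod 4)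
          = 1 + (((ρ x * ρ (1 - x)).re : ℤ) : ZMod 4) := by
      intro x hx
      simp only [Finset.mem_sdiff, Finset.mem_univ, Finset.mem_insert, Finset.mem_singleton,
        true_and, not_or] at hx
      have hx0 : x ≠ 0 := hx.1
      have hx1 : (1 : ZMod q) - x ≠ 0 := by
        intro h
        exact hx.2 (by linear_combination -h)
      have hu4 : (χ₀ x * χ₀ (1 - x)) ^ 4 = 1 := by
        rw [mul_pow, hpow4' x hx0, hpow4' _ hx1, one_mul]
      have hsq : ρ x * ρ (1 - x) = (χ₀ x * χ₀ (1 - x)) ^ 2 := by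
        rw [hρ, MulChar.mul_apply, MulChar.mul_apply]
        ring
      rw [hsq]
      have huS := unit_mem_S hu4
      revert hu4
      generalize (χ₀ x * χ₀ (1 - x)) = u at huS ⊢
      intro hu4
      fin_cases huS <;> first | (exact absurd hu4 (by decide)) | decide
    have hre1 : J₀.re = ∑ x ∈ univ \ ({0, 1} : Finset (ZMod q)), (χ₀ x * χ₀ (1 - x)).re := by
      rw [hJsd]
      exact map_sum reHom _ _
    have hreB : (jacobiSum ρ ρ).re
        = ∑ x ∈ univ \ ({0, 1} : Finset (ZMod q)), (ρ x * ρ (1 - x)).re := by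
      rw [hJρsd]
      exact map_sum reHom _ _
    have hstep1 : ((2 * J₀.re : ℤ) : ZMod 4)
        = ∑ x ∈ univ \ ({0, 1} : Finset (ZMod q)),
            ((2 * (χ₀ x * χ₀ (1 - x)).re : ℤ) : ZMod 4) := by
      rw [hre1, Finset.mul_sum]
      push_cast
      rfl
    have hstep2 := Finset.sum_congr rfl hterm
    have hstep3 : ∑ x ∈ univ \ ({0, 1} : Finset (ZMod q)),
        (1 + (((ρ x * ρ (1 - x)).re : ℤ) : ZMod 4))
          = ((q - 2 : ℕ) : ZMod 4) + (((jacobiSum ρ ρ).re : ℤ) : ZMod 4) := by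
      rw [Finset.sum_add_distrib, Finset.sum_const, hcard, hreB]
      push_cast
      ring
    have hq1 : ((q : ℕ) : ZMod 4) = 1 := by
      have h := ZMod.natCast_mod q 4
      rw [hq4] at h
      rw [← h]
      norm_num
    have hfin : (((jacobiSum ρ ρ).re : ℤ) : ZMod 4) = -1 := by
      rw [hJρ]
      norm_num
    rw [hstep1, hstep2, hstep3, hfin]
    have hq2 : ((q - 2 : ℕ) : ZMod 4) = -1 := by
      have : ((q - 2 : ℕ) : ZMod 4) = ((q : ℕ) : ZMod 4) - 2 := by
        have h5 : 2 ≤ q := by omega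
        push_cast [Nat.cast_sub h5]
        ring
      rw [this, hq1]
      norm_num
    rw [hq2]
    decide
  -- exclude m = 0, gi, -gi
  have hmS' : m = 0 ∨ m = 1 ∨ m = -1 ∨ m = gi ∨ m = -gi := by
    simpa [S, Finset.mem_insert, Finset.mem_singleton] using hmS
  rcases hmS' with rfl | rfl | rfl | rfl | rfl
  · exact absurd hmnorm (by decide)
  · exact Or.inl rfl
  · exact Or.inr rfl
  · exfalso
    obtain ⟨t, ht⟩ := him
    have hJre : J₀.re = -l'.im := by
      rw [hm]
      simp [gi, Zsqrtd.re_mul]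
    rw [hJre, ht] at hre
    have h0 : ((2 * -(2 * t) : ℤ) : ZMod 4) = 0 := by
      have h4 : ((4 : ℤ) : ZMod 4) = 0 := by decide
      calc ((2 * -(2 * t) : ℤ) : ZMod 4) = -(((4 : ℤ) : ZMod 4)) * (t : ZMod 4) := by
            push_cast; ring
        _ = 0 := by rw [h4]; ring
    rw [h0] at hre
    exact absurd hre.symm (by decide)
  · exfalso
    obtain ⟨t, ht⟩ := him
    have hJre : J₀.re = l'.im := by
      rw [hm]
      simp [gi, Zsqrtd.re_mul]
    rw [hJre, ht] at hre
    have h0 : ((2 * (2 * t) : ℤ) : ZMod 4) = 0 := by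
      have h4 : ((4 : ℤ) : ZMod 4) = 0 := by decide
      calc ((2 * (2 * t) : ℤ) : ZMod 4) = (((4 : ℤ) : ZMod 4)) * (t : ZMod 4) := by
            push_cast; ring
        _ = 0 := by rw [h4]; ring
    rw [h0] at hre
    exact absurd hre.symm (by decide)

end

end Stmt18

open Stmt18 in
/-- for coprime primary Gaussian primes λ, λ' of norms
p ≠ q, both ≡ 1 mod 4, the product of the rational quartic residue symbols
(p/q)₄ (q/p)₄ equals the quadratic residue symbol (λ'/λ)₂. The symbols are
characterized by the congruences q^((p-1)/4) ≡ εp mod λ, p^((q-1)/4) ≡ εq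
mod λ', λ'^((p-1)/2) ≡ εl mod λ, with εp, εq fourth roots of unity and εl
a square root of unity. -/
theorem stmt18 (l l' : GaussianInt) (hl : Prime l) (hl' : Prime l')
    (hlprimary : ((⟨2, 2⟩ : GaussianInt)) ∣ (l - 1))
    (hl'primary : ((⟨2, 2⟩ : GaussianInt)) ∣ (l' - 1))
    (p q : ℕ) (hp : p.Prime) (hq : q.Prime)
    (hp4 : p % 4 = 1) (hq4 : q % 4 = 1) (hpq : p ≠ q)
    (hNp : l.norm = (p : ℤ)) (hNq : l'.norm = (q : ℤ))
    (hcop : IsCoprime l l')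
    (εp εq εl : GaussianInt) (hεp : εp ^ 4 = 1) (hεq : εq ^ 4 = 1) (hεl : εl ^ 2 = 1)
    (h1 : l ∣ ((q : GaussianInt) ^ ((p - 1) / 4) - εp))
    (h2 : l' ∣ ((p : GaussianInt) ^ ((q - 1) / 4) - εq))
    (h3 : l ∣ (l' ^ ((p - 1) / 2) - εl)) :
    εp * εq = εl := by
  haveI hpF : Fact p.Prime := ⟨hp⟩
  haveI hqF : Fact q.Prime := ⟨hq⟩
  have hp5 : 5 ≤ p := by have := hp.two_le; omega
  have hq5 : 5 ≤ q := by have := hq.two_le; omega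
  obtain ⟨φp, hkerp⟩ := exists_resHom l p hp hl hNp
  obtain ⟨φq, hkerq⟩ := exists_resHom l' q hq hl' hNq
  obtain ⟨χ₀, hSv, hphi, hpow4, hex, hneg1⟩ := exists_quarChar q hq hq4 l' φq hkerq hNq
  obtain ⟨m, hm, hm1⟩ :=
    jacobi_structure q hq4 l' hl' hl'primary φq hkerq hNq χ₀ hphi hpow4 hex hneg1
  -- the target field of characteristic p containing q-th roots of unity
  have hchar : ringChar (ZMod p) ≠ ringChar (ZMod q) := by
    rw [ZMod.ringChar_zmod_n, ZMod.ringChar_zmod_n]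
    exact hpq
  set ψ := AddChar.FiniteField.primitiveChar (ZMod q) (ZMod p) hchar with hψ
  set FF := CyclotomicField ψ.n (ZMod p) with hFF
  haveI : CharP FF p := charP_of_injective_algebraMap (algebraMap (ZMod p) FF).injective p
  set Φ : GaussianInt →+* FF := (algebraMap (ZMod p) FF).comp φp with hΦ
  have hΦapp : ∀ z, Φ z = algebraMap (ZMod p) FF (φp z) := fun z => rfl
  have hΦinj : ∀ u ∈ S, ∀ v ∈ S, Φ u = Φ v → u = v := by
    intro u hu v hv h
    refine phi_injOn_S hp5 hkerp hNp hu hv ?_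
    exact (algebraMap (ZMod p) FF).injective h
  set χF : MulChar (ZMod q) FF := χ₀.ringHomComp Φ with hχF
  have hχFapp : ∀ a, χF a = Φ (χ₀ a) := fun a => rfl
  have h1S : (1 : GaussianInt) ∈ S := by decide
  have hm1S : (-1 : GaussianInt) ∈ S := by decide
  -- nontriviality of χF and χF²
  obtain ⟨a₀, ha₀⟩ := hex
  have hχ₀a₀ : χ₀ (a₀ : ZMod q) ≠ 1 := by
    intro h
    rw [h] at ha₀
    exact absurd ha₀ (by decide)
  have hχFne : χF ≠ 1 := by
    rw [MulChar.ne_one_iff]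
    refine ⟨a₀, ?_⟩
    rw [hχFapp]
    intro h
    exact hχ₀a₀ (hΦinj _ (hSv _) _ h1S (by rw [h, map_one]))
  have hχF2ne : χF * χF ≠ 1 := by
    rw [MulChar.ne_one_iff]
    refine ⟨a₀, ?_⟩
    rw [MulChar.mul_apply, hχFapp, ← map_mul, ← pow_two, ha₀]
    intro h
    have h2' : (-1 : GaussianInt) = 1 := hΦinj _ hm1S _ h1S (by rw [h, map_one])
    exact absurd h2' (by decide)
  -- χF² is quadratic
  have hpow4' : ∀ a : ZMod q, a ≠ 0 → (χ₀ a) ^ 4 = 1 := fun a ha => hpow4 (Units.mk0 a ha)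
  have hquad : MulChar.IsQuadratic (χF * χF) := by
    intro a
    by_cases ha : a = 0
    · left
      rw [ha]
      exact MulChar.map_zero _
    · have h4 := hpow4' a ha
      have hsq : ((χ₀ a) ^ 2) * ((χ₀ a) ^ 2) = 1 := by
        rw [← pow_add]
        exact h4
      rcases mul_self_eq_one_iff.mp hsq with h | h
      · right; left
        rw [MulChar.mul_apply, hχFapp, ← map_mul, ← pow_two, h, map_one]
      · right; right
        rw [MulChar.mul_apply, hχFapp, ← map_mul, ← pow_two, h, map_neg, map_one]
  -- q is invertible in FF
  have hqp : ¬ (p ∣ q) := fun h => hpq ((Nat.prime_dvd_prime_iff_eq hp hq).mp h)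
  have hqZp : ((q : ℕ) : ZMod p) ≠ 0 := by
    rw [Ne, ZMod.natCast_eq_zero_iff]
    exact hqp
  have hqFF : ((q : ℕ) : FF) ≠ 0 := by
    intro h
    have : algebraMap (ZMod p) FF ((q : ℕ) : ZMod p) = algebraMap (ZMod p) FF 0 := by
      rw [map_natCast, map_zero]
      exact h
    exact hqZp ((algebraMap (ZMod p) FF).injective this)
  set g := gaussSum χF ψ.char with hg
  have hgne : g ≠ 0 := by
    refine gaussSum_ne_zero_of_nontrivial ?_ hχFne ψ.prim
    rw [ZMod.card]
    exact hqFF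
  have hJg : gaussSum (χF * χF) ψ.char * jacobiSum χF χF = g * g :=
    jacobiSum_mul_nontrivial hχF2ne ψ.char
  have hχ2neg1 : (χF * χF) (-1) = 1 := by
    rw [MulChar.mul_apply, hχFapp, ← map_mul, ← pow_two, hneg1, map_one]
  have hg2 : gaussSum (χF * χF) ψ.char ^ 2 = ((q : ℕ) : FF) := by
    rw [gaussSum_sq hχF2ne hquad ψ.prim, hχ2neg1, one_mul, ZMod.card]
  have hg4 : g ^ 4 = ((q : ℕ) : FF) * (jacobiSum χF χF) ^ 2 := by
    have e1 : g ^ 4 = (g * g) ^ 2 := by ring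
    rw [e1, ← hJg, mul_pow, hg2]
  -- Frobenius step
  have hχFp : χF ^ p = χF := by
    refine MulChar.ext fun a => ?_
    rw [MulChar.pow_apply_coe]
    have h4 : (χ₀ (a : ZMod q)) ^ 4 = 1 := hpow4 a
    have hpe : (χ₀ (a : ZMod q)) ^ p = χ₀ (a : ZMod q) := by
      have hp14 : p = 4 * (p / 4) + 1 := by omega
      rw [hp14, pow_add, pow_mul, h4, one_pow, one_mul, pow_one]
    calc (χF (a : ZMod q)) ^ p = Φ ((χ₀ (a : ZMod q)) ^ p) := by rw [map_pow, hχFapp]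
      _ = Φ (χ₀ (a : ZMod q)) := by rw [hpe]
      _ = χF (a : ZMod q) := (hχFapp _).symm
  have hfrob : g ^ p = gaussSum χF (ψ.char.mulShift ((p : ℕ) : ZMod q)) := by
    rw [hg, gaussSum_frob p χF ψ.char, hχFp, AddChar.pow_mulShift]
  have hpZq : ((p : ℕ) : ZMod q) ≠ 0 := by
    rw [Ne, ZMod.natCast_eq_zero_iff]
    exact fun h => hpq ((Nat.prime_dvd_prime_iff_eq hq hp).mp h).symm
  have hpu : IsUnit ((p : ℕ) : ZMod q) := isUnit_iff_ne_zero.mpr hpZq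
  have hkey : χF ((p : ℕ) : ZMod q) * g ^ p = g := by
    have := gaussSum_mulShift χF ψ.char hpu.unit
    rw [hpu.unit_spec] at this
    rw [hfrob]
    exact this
  set k := (p - 1) / 4 with hk
  have hp14 : p = 4 * k + 1 := by omega
  have hgp : g ^ p = g * (((q : ℕ) : FF) * (jacobiSum χF χF) ^ 2) ^ k := by
    calc g ^ p = g ^ (4 * k + 1) := congrArg (fun n => g ^ n) hp14
      _ = (g ^ 4) ^ k * g := by rw [pow_succ, pow_mul]
      _ = g * (((q : ℕ) : FF) * (jacobiSum χF χF) ^ 2) ^ k := by rw [hg4]; ring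
  have hmain : χF ((p : ℕ) : ZMod q) * (((q : ℕ) : FF) * (jacobiSum χF χF) ^ 2) ^ k = 1 := by
    have h := hkey
    rw [hgp] at h
    have h' : (χF ((p : ℕ) : ZMod q) * (((q : ℕ) : FF) * (jacobiSum χF χF) ^ 2) ^ k) * g
        = 1 * g := by
      rw [one_mul]
      calc (χF ((p : ℕ) : ZMod q) * (((q : ℕ) : FF) * (jacobiSum χF χF) ^ 2) ^ k) * g
          = χF ((p : ℕ) : ZMod q) * (g * (((q : ℕ) : FF) * (jacobiSum χF χF) ^ 2) ^ k) := by ring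
        _ = g := h
    exact mul_right_cancel₀ hgne h'
  -- identify the three factors
  have hεqv : χ₀ ((p : ℕ) : ZMod q) = εq := by
    refine phi_injOn_S hq5 hkerq hNq (hSv _) (unit_mem_S hεq) ?_
    have hd : φq ((p : GaussianInt) ^ ((q - 1) / 4) - εq) = 0 := (hkerq _).mpr h2
    rw [map_sub, sub_eq_zero] at hd
    rw [hphi]
    rw [← hd, map_pow, map_natCast]
  have hFq : χF ((p : ℕ) : ZMod q) = Φ εq := by rw [hχFapp, hεqv]
  have hεpv : Φ (((q : ℕ) : GaussianInt) ^ k) = Φ εp := by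
    have hd : φp ((q : GaussianInt) ^ ((p - 1) / 4) - εp) = 0 := (hkerp _).mpr h1
    rw [map_sub, sub_eq_zero] at hd
    rw [hΦapp, hΦapp]
    rw [hd]
  have hqk : (((q : ℕ) : FF)) ^ k = Φ εp := by
    rw [← map_natCast Φ q, ← map_pow]
    exact hεpv
  have hJΦ : jacobiSum χF χF = Φ (jacobiSum χ₀ χ₀) := by
    rw [hχF]
    exact jacobiSum_ringHomComp χ₀ χ₀ Φ
  have hm2 : m ^ 2 = 1 := by
    rcases hm1 with rfl | rfl <;> decide
  have h2k : 2 * k = (p - 1) / 2 := by omega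
  have hJpow : (jacobiSum χF χF) ^ (2 * k) = Φ εl := by
    rw [hJΦ, ← map_pow, hm]
    have e1 : (l' * m) ^ (2 * k) = l' ^ (2 * k) * (m ^ 2) ^ k := by
      rw [mul_pow, ← pow_mul, mul_comm 2 k, pow_mul]
    rw [e1, hm2, one_pow, mul_one, h2k]
    have hd : φp (l' ^ ((p - 1) / 2) - εl) = 0 := (hkerp _).mpr h3
    rw [map_sub, sub_eq_zero] at hd
    rw [hΦapp, hΦapp, hd]
  have hfinal : Φ (εq * (εp * εl)) = Φ 1 := by
    rw [map_one, map_mul, map_mul]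
    rw [← hFq, ← hqk, ← hJpow]
    calc χF ((p : ℕ) : ZMod q) * (((q : ℕ) : FF) ^ k * (jacobiSum χF χF) ^ (2 * k))
        = χF ((p : ℕ) : ZMod q) * (((q : ℕ) : FF) * (jacobiSum χF χF) ^ 2) ^ k := by
          rw [mul_pow, ← pow_mul, mul_comm 2 k]
      _ = 1 := hmain
  have hεpS : εp ∈ S := unit_mem_S hεp
  have hεqS : εq ∈ S := unit_mem_S hεq
  have hεlS : εl ∈ S := by
    have hεl' : εl * εl = 1 := by rw [← pow_two]; exact hεl
    rcases mul_self_eq_one_iff.mp hεl' with h | h <;> rw [h] <;> decide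
  have hw : εq * (εp * εl) = 1 :=
    hΦinj _ (S_mul_S hεqS (S_mul_S hεpS hεlS)) _ h1S hfinal
  linear_combination εl * hw - εp * εq * hεl
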